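/- (Bauer maximum principle.) Let E be a finite-dimensional real normed vector space, K ⊆ E a nonempty compact convex set, and f : E → ℝ a function that is continuous on K and convex on K (ConvexOn ℝ K f). Then f attains its maximum over K at an extreme point of K: there exists x ∈ Set.extremePoints ℝ K with f(y) ≤ f(x) for all y ∈ K. -/
import Mathlib

/-- Bauer maximum principle: a function continuous and convex on a nonempty
compact convex subset `K` of a finite-dimensional real normed space attains
its maximum over `K` at an extreme point of `K`. -/
theorem bauer_maximum_principle (E : Type*) [NormedAddCommGroup E]
    [NormedSpace ℝ E] [FiniteDimensional ℝ E]
    (K : Set E) (hne : K.Nonempty) (hcomp : IsCompact K) (hconv : Convex ℝ K)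
    (f : E → ℝ) (hcont : ContinuousOn f K) (hconvf : ConvexOn ℝ K f) :
    ∃ x ∈ Set.extremePoints ℝ K, ∀ y ∈ K, f y ≤ f x := by
  obtain ⟨x₀, hx₀K, hx₀max⟩ := hcomp.exists_isMaxOn hne hcont
  set c := f x₀ with hc
  set M : Set E := K ∩ f ⁻¹' {c} with hM
  have hMclosed : IsClosed M :=
    hcont.preimage_isClosed_of_isClosed hcomp.isClosed isClosed_singleton
  have hMcomp : IsCompact M := hcomp.of_isClosed_subset hMclosed Set.inter_subset_left
  have hMne : M.Nonempty := ⟨x₀, hx₀K, rfl⟩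
  obtain ⟨x, hx⟩ := hMcomp.extremePoints_nonempty hMne
  rw [mem_extremePoints] at hx
  obtain ⟨⟨hxK, hxc⟩, hxext⟩ := hx
  have hxc : f x = c := hxc
  refine ⟨x, ?_, fun y hy => hxc ▸ hx₀max hy⟩
  rw [mem_extremePoints]
  refine ⟨hxK, fun a ha b hb hseg => ?_⟩
  -- show a, b ∈ M
  obtain ⟨ta, tb, hta, htb, htab, hsum⟩ := hseg
  have hfa : f a ≤ c := hx₀max ha
  have hfb : f b ≤ c := hx₀max hb
  have hcomb : f x ≤ ta * f a + tb * f b := by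
    have := hconvf.2 ha hb hta.le htb.le htab
    rw [hsum] at this
    simpa [smul_eq_mul] using this
  have hfa' : f a = c := by
    by_contra h
    have h1 : f a < c := lt_of_le_of_ne hfa h
    have : ta * f a + tb * f b < ta * c + tb * c := by
      apply add_lt_add_of_lt_of_le
      · exact (mul_lt_mul_iff_right₀ hta).2 h1
      · exact mul_le_mul_of_nonneg_left hfb htb.le
    rw [← add_mul, htab, one_mul] at this
    linarith [hcomb, hxc ▸ this]
  have hfb' : f b = c := by
    by_contra h
    have h1 : f b < c := lt_of_le_of_ne hfb h
    have h2 : tb * f b < tb * c := (mul_lt_mul_iff_right₀ htb).2 h1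
    have h3 : ta * f a + tb * f b ≥ c := hxc ▸ hcomb
    rw [hfa'] at h3
    have h4 : ta * c + tb * c = c := by rw [← add_mul, htab, one_mul]
    linarith
  exact hxext a ⟨ha, hfa'⟩ b ⟨hb, hfb'⟩ ⟨ta, tb, hta, htb, htab, hsum⟩
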